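/- Let {σ_n} be an orthonormal Hermitian basis and V Hermitian, and define L_{kℓ} = Tr(V σ_k V σ_ℓ) − (1/2) Tr(V² (σ_k σ_ℓ + σ_ℓ σ_k)). Then L is real symmetric and negative semidefinite. -/

import Mathlib

open Matrix

/-- For an orthonormal Hermitian basis `{σ_n}` and Hermitian `V`, the matrix
`L_{kℓ} = Tr(V σ_k V σ_ℓ) - (1/2) Tr(V² (σ_k σ_ℓ + σ_ℓ σ_k))` is real, symmetric, and
negative semidefinite. -/
theorem stmt_18 (N : ℕ) (σ : Fin (N ^ 2) → Matrix (Fin N) (Fin N) ℂ)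
    (hherm : ∀ n, (σ n).IsHermitian)
    (horthn : ∀ k ℓ, ((σ k)ᴴ * σ ℓ).trace = if k = ℓ then 1 else 0)
    (V : Matrix (Fin N) (Fin N) ℂ) (hV : V.IsHermitian)
    (L : Fin (N ^ 2) → Fin (N ^ 2) → ℂ)
    (hL : L = fun k ℓ => (V * σ k * V * σ ℓ).trace
      - (1 / 2 : ℂ) * (V * V * (σ k * σ ℓ + σ ℓ * σ k)).trace)
    (Lre : Matrix (Fin (N ^ 2)) (Fin (N ^ 2)) ℝ)
    (hLre : Lre = Matrix.of fun k ℓ => (L k ℓ).re) :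
    (∀ k ℓ, (L k ℓ).im = 0) ∧ Lre.IsSymm ∧ (-Lre).PosSemidef := by
  set C : Fin (N ^ 2) → Matrix (Fin N) (Fin N) ℂ := fun k => V * σ k - σ k * V with hC
  have cyc4 : ∀ (A B Cc D : Matrix (Fin N) (Fin N) ℂ),
      (A * B * (Cc * D)).trace = (D * A * (B * Cc)).trace := by
    intro A B Cc D
    rw [← mul_assoc, trace_mul_comm (A * B * Cc) D, ← mul_assoc, ← mul_assoc, mul_assoc]
  have key : ∀ k ℓ, (C k * C ℓ).trace = 2 * L k ℓ := by
    intro k ℓ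
    have e0 : (V * σ k * V * σ ℓ).trace = (V * σ k * (V * σ ℓ)).trace := by rw [mul_assoc]
    have e1 : (σ k * V * (σ ℓ * V)).trace = (V * σ k * (V * σ ℓ)).trace := cyc4 _ _ _ _
    have e2 : (V * σ k * (σ ℓ * V)).trace = (V * V * (σ k * σ ℓ)).trace := cyc4 _ _ _ _
    have e3 : (σ k * V * (V * σ ℓ)).trace = (V * V * (σ ℓ * σ k)).trace := by
      rw [cyc4, trace_mul_comm]
    simp only [hL, hC, sub_mul, mul_sub, trace_sub, mul_add, trace_add, e0, e1, e2, e3]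
    ring
  have hCstar : ∀ k, (C k)ᴴ = -(C k) := by
    intro k
    simp only [hC, conjTranspose_sub, conjTranspose_mul, hV.eq, (hherm k).eq, neg_sub]
  have hsymm : ∀ k ℓ, L k ℓ = L ℓ k := by
    intro k ℓ
    have h := key k ℓ
    rw [trace_mul_comm, key ℓ k] at h
    exact (mul_left_cancel₀ two_ne_zero h).symm
  have hreal : ∀ k ℓ, (L k ℓ).im = 0 := by
    intro k ℓ
    have h1 : star ((C k * C ℓ).trace) = (C k * C ℓ).trace := by
      rw [← trace_conjTranspose, conjTranspose_mul, hCstar, hCstar, neg_mul_neg,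
        trace_mul_comm]
    have h2 : star (2 * L k ℓ) = 2 * L k ℓ := by rw [← key, h1, key]
    have h3 := congrArg Complex.im h2
    simp [Complex.mul_im] at h3
    linarith
  refine ⟨hreal, ?_, ?_⟩
  · rw [Matrix.IsSymm, ← Matrix.ext_iff]
    intro i j
    simp [hLre, transpose_apply, hsymm j i]
  · rw [posSemidef_iff_dotProduct_mulVec]
    constructor
    · rw [IsHermitian, ← Matrix.ext_iff]
      intro i j
      simp [hLre, hsymm j i]
    · intro x
      set D : Matrix (Fin N) (Fin N) ℂ := ∑ k, (x k : ℂ) • C k with hD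
      have htr : (Dᴴ * D).trace = ∑ k, ∑ ℓ, (x k : ℂ) * (x ℓ) * ((C k)ᴴ * C ℓ).trace := by
        rw [hD, conjTranspose_sum, Finset.sum_mul, trace_sum]
        refine Finset.sum_congr rfl fun k _ => ?_
        rw [Finset.mul_sum, trace_sum]
        refine Finset.sum_congr rfl fun ℓ _ => ?_
        rw [conjTranspose_smul, smul_mul_assoc, mul_smul_comm, trace_smul, trace_smul,
          smul_eq_mul, smul_eq_mul, Complex.star_def, Complex.conj_ofReal]
        ring
      have htr2 : (Dᴴ * D).trace = ∑ k, ∑ ℓ, (x k : ℂ) * (x ℓ) * (-(2 * L k ℓ)) := by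
        rw [htr]
        refine Finset.sum_congr rfl fun k _ => Finset.sum_congr rfl fun ℓ _ => ?_
        rw [hCstar, neg_mul, trace_neg, key]
      have hnn : 0 ≤ ((Dᴴ * D).trace).re := by
        have h4 : (Dᴴ * D).trace = ∑ i, ∑ j, star (D j i) * D j i := by
          simp [Matrix.trace, Matrix.diag, Matrix.mul_apply, conjTranspose_apply]
        rw [h4, Complex.re_sum]
        refine Finset.sum_nonneg fun i _ => ?_
        rw [Complex.re_sum]
        refine Finset.sum_nonneg fun j _ => ?_
        simp [Complex.mul_re]
        nlinarith [sq_nonneg (D j i).re, sq_nonneg (D j i).im]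
      have hrhs : star x ⬝ᵥ ((-Lre) *ᵥ x) = ∑ k, ∑ ℓ, x k * (-(L k ℓ).re * x ℓ) := by
        simp only [dotProduct, Matrix.mulVec, dotProduct, Matrix.neg_apply,
          hLre, Matrix.of_apply, Pi.star_apply, star_trivial]
        exact Finset.sum_congr rfl fun k _ => Finset.mul_sum _ _ _
      have hre : ((Dᴴ * D).trace).re = 2 * (star x ⬝ᵥ ((-Lre) *ᵥ x)) := by
        rw [htr2, hrhs, Finset.mul_sum, Complex.re_sum]
        refine Finset.sum_congr rfl fun k _ => ?_
        rw [Finset.mul_sum, Complex.re_sum]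
        refine Finset.sum_congr rfl fun ℓ _ => ?_
        have h := hreal k ℓ
        simp [Complex.mul_re, Complex.mul_im, h]
        ring
      rw [show star x ⬝ᵥ ((-Lre) *ᵥ x) = ((Dᴴ * D).trace).re / 2 by rw [hre]; ring]
      positivity
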